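/- Let W ∈ ℝ^N, n ≥ 1, and k₀, …, k_{n−1} ∈ ℕ with k₀ + ⋯ + k_{n−1} ≤ N and k₀ + ⋯ + k_{n−1} ≥ 1. Set U := Σ_{t=0}^{n−1} 2^{−t} ‖W_{[k_t]}‖₁ and V := Σ_{t=0}^{n−1} k_t 2^{−2t}. Suppose Q ∈ ℝ^N has, for each t = 0, …, n−1, exactly k_t entries equal to +2^{−t} or −2^{−t}, and all remaining entries equal to 0. Then for every integer s ∈ ℤ, ‖2^s Q − W‖² ≥ V·(2^s − U/V)² − U²/V + ‖W‖² = 2^{2s} V − 2^{s+1} U + ‖W‖². -/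
import Mathlib


/-- `groupAbsSum W σ a b` is the ℓ¹ norm of the part of `W` whose magnitude-ranks
(with respect to the sorting permutation `σ`) lie in `[a, b)`; when `σ` sorts the
entries of `W` in decreasing order of magnitude, `groupAbsSum W σ (P t) (P t + k t)`
equals `‖W_{[k_t]}‖₁` where `P t = k 0 + ⋯ + k (t-1)`. -/
noncomputable def groupAbsSum {N : ℕ} (W : Fin N → ℝ) (σ : Equiv.Perm (Fin N))
    (a b : ℕ) : ℝ :=
  ∑ r ∈ Finset.univ.filter (fun r : Fin N => a ≤ (r : ℕ) ∧ (r : ℕ) < b), |W (σ r)|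

/-- `prefSum k t = k 0 + k 1 + ⋯ + k (t − 1)`. -/
def prefSum (k : ℕ → ℕ) (t : ℕ) : ℕ := ∑ j ∈ Finset.range t, k j

/-- For an antitone sequence `w`, the sum over any finset `D` is at most the sum over
the first `D.card` indices. -/
lemma sum_le_sum_first {N : ℕ} (w : Fin N → ℝ) (hw : ∀ i j : Fin N, i ≤ j → w j ≤ w i)
    (D : Finset (Fin N)) :
    ∑ r ∈ D, w r ≤ ∑ r ∈ Finset.univ.filter (fun r : Fin N => (r : ℕ) < D.card), w r := by
  set m := D.card with hmdef
  have hm : m ≤ N := by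
    simpa using D.card_le_univ
  set f := D.orderEmbOfFin rfl with hf
  have hkey : ∀ v (h : v < m), v ≤ ((f ⟨v, h⟩ : Fin N) : ℕ) := by
    intro v
    induction v with
    | zero => intro h; exact Nat.zero_le _
    | succ v ih =>
      intro h
      have h' : v < m := Nat.lt_of_succ_lt h
      have hlt : f ⟨v, h'⟩ < f ⟨v + 1, h⟩ := f.strictMono (by simp [Fin.lt_def])
      have := ih h'
      have hlt' : ((f ⟨v, h'⟩ : Fin N) : ℕ) < ((f ⟨v + 1, h⟩ : Fin N) : ℕ) := hlt
      omega
  have hD : D = Finset.map ⟨f, f.injective⟩ Finset.univ := by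
    ext r
    simp only [Finset.mem_map, Finset.mem_univ, true_and, Function.Embedding.coeFn_mk]
    constructor
    · intro hr
      have : r ∈ Set.range f := by
        rw [Finset.range_orderEmbOfFin]; exact hr
      obtain ⟨j, hj⟩ := this
      exact ⟨j, hj⟩
    · rintro ⟨j, rfl⟩
      exact D.orderEmbOfFin_mem rfl j
  have hF : Finset.univ.filter (fun r : Fin N => (r : ℕ) < m)
      = Finset.map (Fin.castLEEmb hm) Finset.univ := by
    ext r
    simp only [Finset.mem_filter, Finset.mem_univ, true_and, Finset.mem_map,
      Fin.castLEEmb, Function.Embedding.coeFn_mk]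
    constructor
    · intro hr
      exact ⟨⟨(r : ℕ), hr⟩, by simp [Fin.castLE, Fin.ext_iff]⟩
    · rintro ⟨j, rfl⟩
      exact j.2
  rw [hD, hF, Finset.sum_map, Finset.sum_map]
  apply Finset.sum_le_sum
  intro j _
  apply hw
  rw [Fin.le_def]
  simpa using hkey j j.2

/-- Abel-summation inequality: if `c` is nonnegative and nonincreasing and all prefix
sums of `a` are dominated by those of `b`, then `∑ c t * a t ≤ ∑ c t * b t`. -/
lemma abel_ineq (n : ℕ) (c a b : ℕ → ℝ)
    (hc0 : ∀ t, 0 ≤ c t) (hcmono : ∀ t, c (t + 1) ≤ c t)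
    (hab : ∀ u, u ≤ n → ∑ t ∈ Finset.range u, a t ≤ ∑ t ∈ Finset.range u, b t) :
    ∑ t ∈ Finset.range n, c t * a t ≤ ∑ t ∈ Finset.range n, c t * b t := by
  have h1 := Finset.sum_range_by_parts c a n
  have h2 := Finset.sum_range_by_parts c b n
  simp only [smul_eq_mul] at h1 h2
  rw [h1, h2]
  have key : ∀ (x : ℕ → ℝ), c (n - 1) * (∑ t ∈ Finset.range n, x t)
      - ∑ i ∈ Finset.range (n - 1), (c (i + 1) - c i) * ∑ j ∈ Finset.range (i + 1), x j
      = c (n - 1) * (∑ t ∈ Finset.range n, x t)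
      + ∑ i ∈ Finset.range (n - 1), (c i - c (i + 1)) * ∑ j ∈ Finset.range (i + 1), x j := by
    intro x
    rw [sub_eq_add_neg, ← Finset.sum_neg_distrib]
    congr 1
    apply Finset.sum_congr rfl
    intro i _
    ring
  rw [key a, key b]
  apply add_le_add
  · apply mul_le_mul_of_nonneg_left (hab n le_rfl) (hc0 _)
  · apply Finset.sum_le_sum
    intro i hi
    apply mul_le_mul_of_nonneg_left _ (by linarith [hcmono i] : 0 ≤ c i - c (i + 1))
    exact hab (i + 1) (by simp at hi; omega)

/-- Lower bound on the least-squares quantization error for a fixed profile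
`(k 0, …, k (n−1))`: with `U = ∑_t 2^(−t) ‖W_{[k_t]}‖₁` and `V = ∑_t k t · 2^(−2t)`,
for every `s ∈ ℤ`,
`‖2^s Q − W‖² ≥ V (2^s − U/V)² − U²/V + ‖W‖² = 2^(2s) V − 2^(s+1) U + ‖W‖²`. -/
theorem quantization_error_lower_bound {N n : ℕ} (hn : 1 ≤ n) (W : Fin N → ℝ)
    (k : ℕ → ℕ)
    (hsum : ∑ t ∈ Finset.range n, k t ≤ N)
    (hpos : 1 ≤ ∑ t ∈ Finset.range n, k t)
    (σ : Equiv.Perm (Fin N))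
    (hσ : ∀ i j : Fin N, i ≤ j → |W (σ j)| ≤ |W (σ i)|)
    (Q : Fin N → ℝ)
    (hcount : ∀ t < n, (Finset.univ.filter
        (fun i : Fin N => Q i = (2 : ℝ) ^ (-(t : ℤ)) ∨ Q i = -(2 : ℝ) ^ (-(t : ℤ)))).card = k t)
    (hrest : ∀ i : Fin N, Q i ≠ 0 →
        ∃ t < n, Q i = (2 : ℝ) ^ (-(t : ℤ)) ∨ Q i = -(2 : ℝ) ^ (-(t : ℤ)))
    (U V : ℝ)
    (hU : U = ∑ t ∈ Finset.range n, (2 : ℝ) ^ (-(t : ℤ)) *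
        groupAbsSum W σ (prefSum k t) (prefSum k t + k t))
    (hV : V = ∑ t ∈ Finset.range n, (k t : ℝ) * (2 : ℝ) ^ (-(2 * (t : ℤ))))
    (s : ℤ) :
    V * ((2 : ℝ) ^ s - U / V) ^ 2 - U ^ 2 / V + ∑ i, (W i) ^ 2
        ≤ ∑ i, ((2 : ℝ) ^ s * Q i - W i) ^ 2 ∧
      V * ((2 : ℝ) ^ s - U / V) ^ 2 - U ^ 2 / V + ∑ i, (W i) ^ 2
        = (2 : ℝ) ^ (2 * s) * V - (2 : ℝ) ^ (s + 1) * U + ∑ i, (W i) ^ 2 := by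
  classical
  -- level sets of Q
  set A : ℕ → Finset (Fin N) := fun t => Finset.univ.filter
      (fun i : Fin N => Q i = (2 : ℝ) ^ (-(t : ℤ)) ∨ Q i = -(2 : ℝ) ^ (-(t : ℤ)))
    with hA
  have habs : ∀ t, ∀ i ∈ A t, |Q i| = (2 : ℝ) ^ (-(t : ℤ)) := by
    intro t i hi
    rw [hA, Finset.mem_filter] at hi
    rcases hi.2 with h | h
    · rw [h]; exact abs_of_pos (by positivity)
    · rw [h, abs_neg]; exact abs_of_pos (by positivity)
  have hAdisj : ∀ t t' : ℕ, t ≠ t' → Disjoint (A t) (A t') := by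
    intro t t' htt'
    rw [Finset.disjoint_left]
    intro i hi hi'
    have h1 := habs t i hi
    have h2 := habs t' i hi'
    have : (-(t : ℤ)) = (-(t' : ℤ)) := by
      apply zpow_right_injective₀ (by norm_num : (0:ℝ) < 2) (by norm_num)
      show (2 : ℝ) ^ (-(t : ℤ)) = (2 : ℝ) ^ (-(t' : ℤ))
      rw [← h1, ← h2]
    exact htt' (by omega)
  set B : Finset (Fin N) := (Finset.range n).biUnion A with hB
  have hBpd : (↑(Finset.range n) : Set ℕ).PairwiseDisjoint A := by
    intro t _ t' _ htt'
    exact hAdisj t t' htt'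
  have hQzero : ∀ i ∉ B, Q i = 0 := by
    intro i hi
    by_contra h
    obtain ⟨t, htn, ht⟩ := hrest i h
    exact hi (Finset.mem_biUnion.mpr ⟨t, Finset.mem_range.mpr htn, by
      rw [hA, Finset.mem_filter]; exact ⟨Finset.mem_univ i, ht⟩⟩)
  -- Step B : ∑ Q² = V
  have hQsqV : ∑ i, (Q i) ^ 2 = V := by
    rw [← Finset.sum_subset (Finset.subset_univ B)
      (fun i _ hi => by rw [hQzero i hi]; ring)]
    rw [hB, Finset.sum_biUnion hBpd, hV]
    apply Finset.sum_congr rfl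
    intro t ht
    rw [Finset.mem_range] at ht
    have : ∀ i ∈ A t, (Q i) ^ 2 = (2 : ℝ) ^ (-(2 * (t : ℤ))) := by
      intro i hi
      have := habs t i hi
      rw [← sq_abs, this, sq, ← zpow_add₀ (by norm_num : (2:ℝ) ≠ 0)]
      congr 1
      ring
    rw [Finset.sum_congr rfl this, Finset.sum_const, ← hcount t ht, hA]
    simp [mul_comm]
  -- the antitone weight
  set w : Fin N → ℝ := fun r => |W (σ r)| with hw
  -- partial-sum comparison
  have hprefix : ∀ u, u ≤ n →
      ∑ t ∈ Finset.range u, (∑ i ∈ A t, |W i|)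
        ≤ ∑ t ∈ Finset.range u, groupAbsSum W σ (prefSum k t) (prefSum k t + k t) := by
    intro u hu
    -- RHS as a sum over an initial segment
    have hRHS : ∀ v, v ≤ n → ∑ t ∈ Finset.range v,
        groupAbsSum W σ (prefSum k t) (prefSum k t + k t)
        = ∑ r ∈ Finset.univ.filter (fun r : Fin N => (r : ℕ) < prefSum k v), w r := by
      intro v hv
      induction v with
      | zero =>
        simp [prefSum]
      | succ v ih =>
        rw [Finset.sum_range_succ, ih (le_of_lt (Nat.lt_of_succ_le hv))]
        have hsplit := Finset.sum_filter_add_sum_filter_not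
          (Finset.univ.filter (fun r : Fin N => (r : ℕ) < prefSum k (v + 1)))
          (fun r : Fin N => (r : ℕ) < prefSum k v) w
        have hPsucc : prefSum k (v + 1) = prefSum k v + k v := by
          simp [prefSum, Finset.sum_range_succ]
        have e1 : (Finset.univ.filter (fun r : Fin N => (r : ℕ) < prefSum k (v + 1))).filter
            (fun r : Fin N => (r : ℕ) < prefSum k v)
            = Finset.univ.filter (fun r : Fin N => (r : ℕ) < prefSum k v) := by
          rw [Finset.filter_filter]
          apply Finset.filter_congr
          intro r _
          constructor
          · exact fun h => h.2
          · intro h; exact ⟨by omega, h⟩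
        have e2 : (Finset.univ.filter (fun r : Fin N => (r : ℕ) < prefSum k (v + 1))).filter
            (fun r : Fin N => ¬ (r : ℕ) < prefSum k v)
            = Finset.univ.filter
              (fun r : Fin N => prefSum k v ≤ (r : ℕ) ∧ (r : ℕ) < prefSum k v + k v) := by
          rw [Finset.filter_filter]
          apply Finset.filter_congr
          intro r _
          omega
        rw [e1, e2] at hsplit
        rw [← hsplit]
        rfl
    rw [hRHS u hu]
    -- LHS as a sum over a single set
    have hL : ∑ t ∈ Finset.range u, (∑ i ∈ A t, |W i|)
        = ∑ i ∈ (Finset.range u).biUnion A, |W i| :=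
      (Finset.sum_biUnion (fun t _ t' _ htt' => hAdisj t t' htt')).symm
    rw [hL]
    -- transport along σ
    set D : Finset (Fin N) := ((Finset.range u).biUnion A).map σ.symm.toEmbedding with hD
    have hLD : ∑ i ∈ (Finset.range u).biUnion A, |W i| = ∑ r ∈ D, w r := by
      rw [hD, Finset.sum_map]
      apply Finset.sum_congr rfl
      intro i _
      simp [hw]
    have hcardD : D.card = prefSum k u := by
      rw [hD, Finset.card_map, Finset.card_biUnion (fun t _ t' _ htt' => hAdisj t t' htt')]
      apply Finset.sum_congr rfl
      intro t ht
      rw [Finset.mem_range] at ht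
      exact hcount t (lt_of_lt_of_le ht hu)
    rw [hLD]
    calc ∑ r ∈ D, w r
        ≤ ∑ r ∈ Finset.univ.filter (fun r : Fin N => (r : ℕ) < D.card), w r :=
          sum_le_sum_first w hσ D
      _ = ∑ r ∈ Finset.univ.filter (fun r : Fin N => (r : ℕ) < prefSum k u), w r := by
          rw [hcardD]
  -- Step C : ∑ Q W ≤ U
  have hQWU : ∑ i, Q i * W i ≤ U := by
    have h1 : ∑ i, Q i * W i ≤ ∑ i, |Q i| * |W i| := by
      apply Finset.sum_le_sum
      intro i _
      calc Q i * W i ≤ |Q i * W i| := le_abs_self _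
        _ = |Q i| * |W i| := abs_mul _ _
    have h2 : ∑ i, |Q i| * |W i|
        = ∑ t ∈ Finset.range n, (2 : ℝ) ^ (-(t : ℤ)) * (∑ i ∈ A t, |W i|) := by
      rw [← Finset.sum_subset (Finset.subset_univ B)
        (fun i _ hi => by rw [hQzero i hi]; simp)]
      rw [hB, Finset.sum_biUnion hBpd]
      apply Finset.sum_congr rfl
      intro t _
      rw [Finset.mul_sum]
      apply Finset.sum_congr rfl
      intro i hi
      rw [habs t i hi]
    calc ∑ i, Q i * W i ≤ ∑ i, |Q i| * |W i| := h1
      _ = ∑ t ∈ Finset.range n, (2 : ℝ) ^ (-(t : ℤ)) * (∑ i ∈ A t, |W i|) := h2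
      _ ≤ ∑ t ∈ Finset.range n, (2 : ℝ) ^ (-(t : ℤ)) *
            groupAbsSum W σ (prefSum k t) (prefSum k t + k t) := by
          apply abel_ineq
          · intro t; positivity
          · intro t
            apply zpow_le_zpow_right₀ one_le_two
            omega
          · exact hprefix
      _ = U := hU.symm
  -- positivity of V
  have hVpos : 0 < V := by
    rw [hV]
    obtain ⟨t, ht, hkt⟩ : ∃ t ∈ Finset.range n, 1 ≤ k t := by
      by_contra h
      push_neg at h
      have h0 : ∑ t ∈ Finset.range n, k t = 0 :=
        Finset.sum_eq_zero (fun t ht => by have := h t ht; omega)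
      omega
    apply Finset.sum_pos'
    · intro t _; positivity
    · refine ⟨t, ht, ?_⟩
      have h1 : (0 : ℝ) < (k t : ℝ) := by exact_mod_cast hkt
      exact mul_pos h1 (by positivity)
  have hVne : V ≠ 0 := ne_of_gt hVpos
  -- power rewrites
  have h2s : (2 : ℝ) ^ (2 * s) = ((2 : ℝ) ^ s) ^ 2 := by
    rw [two_mul, zpow_add₀ (by norm_num : (2:ℝ) ≠ 0)]; ring
  have h1s : (2 : ℝ) ^ (s + 1) = 2 * (2 : ℝ) ^ s := by
    rw [zpow_add₀ (by norm_num : (2:ℝ) ≠ 0)]; ring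
  -- the equality part
  have heq : V * ((2 : ℝ) ^ s - U / V) ^ 2 - U ^ 2 / V + ∑ i, (W i) ^ 2
      = (2 : ℝ) ^ (2 * s) * V - (2 : ℝ) ^ (s + 1) * U + ∑ i, (W i) ^ 2 := by
    rw [h2s, h1s]
    field_simp
    ring
  refine ⟨?_, heq⟩
  rw [heq]
  -- expand the quadratic
  have hexp : ∑ i, ((2 : ℝ) ^ s * Q i - W i) ^ 2
      = (2 : ℝ) ^ (2 * s) * (∑ i, (Q i) ^ 2)
        - (2 : ℝ) ^ (s + 1) * (∑ i, Q i * W i) + ∑ i, (W i) ^ 2 := by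
    rw [Finset.mul_sum, Finset.mul_sum, ← Finset.sum_sub_distrib, ← Finset.sum_add_distrib]
    apply Finset.sum_congr rfl
    intro i _
    rw [h2s, h1s]
    ring
  rw [hexp, hQsqV]
  have hpow : (0 : ℝ) < (2 : ℝ) ^ (s + 1) := by positivity
  nlinarith [mul_le_mul_of_nonneg_left hQWU (le_of_lt hpow)]
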